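/- Let E be a directed graph such that (1) every circuit in E is either terminal or transitory, and (2) for every infinite path λ in E, N_λ is finite. Then there exists a vertex v ∈ E^0 such that E(v) is either a terminal circuit or a tree; explicitly, either v lies on a terminal circuit α with {w ∈ E^0 : v ≥ w} = α^0, or for every vertex w with v ≥ w there is at most one directed path from v to w. -/

import Mathlib

namespace CKGraph

variable {V E : Type*}

/-- One-step relation: there is an edge from `v` to `w`. -/
def Step (o t : E → V) (v w : V) : Prop := ∃ e, o e = v ∧ t e = w

/-- `Reach o t v w` means `v ≥ w`: there is a (possibly trivial) directed path
from `v` to `w`. -/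
def Reach (o t : E → V) (v w : V) : Prop := Relation.ReflTransGen (Step o t) v w

/-- A finite path: consecutive edges are composable. -/
def IsPath (o t : E → V) (p : List E) : Prop := List.Chain' (fun e f => t e = o f) p

/-- An infinite path. -/
def IsInfPath (o t : E → V) (p : ℕ → E) : Prop := ∀ n, t (p n) = o (p (n + 1))

/-- Tail-equivalence of infinite paths: they eventually share the same tail. -/
def InfEquiv (p q : ℕ → E) : Prop := ∃ j k : ℕ, ∀ r : ℕ, p (j + r) = q (k + r)

/-- The set of vertices occurring in a finite path. -/
def FinPathVerts (o t : E → V) (p : List E) : Set V := {v | ∃ e ∈ p, o e = v ∨ t e = v}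

/-- The set of vertices occurring in an infinite path. -/
def InfPathVerts (o t : E → V) (p : ℕ → E) : Set V := {v | ∃ n, o (p n) = v}

/-- Every vertex emits at most finitely many edges. -/
def RowFinite (o : E → V) : Prop := ∀ v : V, {e : E | o e = v}.Finite

/-- Every vertex emits at least one edge. -/
def NoSinks (o : E → V) : Prop := ∀ v : V, ∃ e : E, o e = v

/-- Condition (M): for every vertex `v` and every infinite path `l`, only finitely
many infinite paths begin at `v` and are equivalent to `l`. -/
def CondM (o t : E → V) : Prop :=
  ∀ (v : V) (l : ℕ → E), IsInfPath o t l →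
    {p : ℕ → E | IsInfPath o t p ∧ o (p 0) = v ∧ InfEquiv p l}.Finite

/-- A circuit: a finite path of positive length whose origin and terminus agree. -/
def IsCircuit (o t : E → V) (p : List E) : Prop :=
  IsPath o t p ∧ ∃ h : p ≠ [], o (p.head h) = t (p.getLast h)

/-- An exit of a circuit: an edge not on the circuit whose origin is a vertex of
the circuit. -/
def IsExit (o t : E → V) (p : List E) (e : E) : Prop :=
  e ∉ p ∧ o e ∈ FinPathVerts o t p

/-- A terminal circuit: a circuit with no exit. -/
def TerminalCircuit (o t : E → V) (p : List E) : Prop :=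
  IsCircuit o t p ∧ ∀ e : E, ¬ IsExit o t p e

/-- A transitory circuit: a circuit with an exit, none of whose exits gets back
to the circuit. -/
def TransitoryCircuit (o t : E → V) (p : List E) : Prop :=
  IsCircuit o t p ∧ (∃ e : E, IsExit o t p e) ∧
    ∀ e : E, IsExit o t p e → ∀ w ∈ FinPathVerts o t p, ¬ Reach o t (t e) w

/-- The set of vertices of the infinite path `l` that emit multiple edges
returning to `l`; its cardinality is `N_l`. -/
def ReturnVerts (o t : E → V) (l : ℕ → E) : Set V :=
  {v | v ∈ InfPathVerts o t l ∧ ∃ e f : E, e ≠ f ∧ o e = v ∧ o f = v ∧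
    (∃ w ∈ InfPathVerts o t l, Reach o t (t e) w) ∧
    (∃ w ∈ InfPathVerts o t l, Reach o t (t f) w)}

/-- A maximal tail. -/
def MaximalTail (o t : E → V) (γ : Set V) : Prop :=
  γ.Nonempty ∧
  (∀ v₁ ∈ γ, ∀ v₂ ∈ γ, ∃ z ∈ γ, Reach o t v₁ z ∧ Reach o t v₂ z) ∧
  (∀ v ∈ γ, ∃ e : E, o e = v ∧ t e ∈ γ) ∧
  (∀ v w : V, Reach o t v w → w ∈ γ → v ∈ γ)

/-- The edge set of the induced subgraph `Graph(γ)`. -/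
def edgesIn (o t : E → V) (γ : Set V) : Set E := {e | o e ∈ γ ∧ t e ∈ γ}

/-- One-step relation in the subgraph with edge set `S`. -/
def StepIn (o t : E → V) (S : Set E) (v w : V) : Prop := ∃ e ∈ S, o e = v ∧ t e = w

/-- Reachability inside the subgraph with edge set `S`. -/
def ReachIn (o t : E → V) (S : Set E) (v w : V) : Prop :=
  Relation.ReflTransGen (StepIn o t S) v w

/-- `H` is saturated in the subgraph with vertex set `V0` and edge set `E0`:
every non-singular vertex of the subgraph all of whose successors lie in `H`
belongs to `H`. -/
def SaturatedIn (o t : E → V) (V0 : Set V) (E0 : Set E) (H : Set V) : Prop :=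
  ∀ v ∈ V0, (∃ e ∈ E0, o e = v) → {e ∈ E0 | o e = v}.Finite →
    (∀ e ∈ E0, o e = v → t e ∈ H) → v ∈ H

/-- The saturation of `S` in the subgraph `(V0, E0)`: the smallest subset of `V0`
containing `S` which is saturated in the subgraph. -/
def saturationIn (o t : E → V) (V0 : Set V) (E0 : Set E) (S : Set V) : Set V :=
  ⋂₀ {H : Set V | S ⊆ H ∧ H ⊆ V0 ∧ SaturatedIn o t V0 E0 H}

/-- A hereditary subset of vertices. -/
def Hereditary (o t : E → V) (H : Set V) : Prop :=
  ∀ v ∈ H, ∀ w : V, Reach o t v w → w ∈ H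

/-- A singular vertex: a sink or an infinite emitter. -/
def Singular (o : E → V) (v : V) : Prop :=
  (¬ ∃ e : E, o e = v) ∨ {e : E | o e = v}.Infinite

/-- A saturated subset of vertices: every non-singular vertex all of whose
successors lie in `H` belongs to `H`. -/
def Saturated (o t : E → V) (H : Set V) : Prop :=
  ∀ v : V, ¬ Singular o v → (∀ e : E, o e = v → t e ∈ H) → v ∈ H

/-- The saturation of `S`: the smallest saturated set containing `S`. -/
def saturation (o t : E → V) (S : Set V) : Set V :=
  ⋂₀ {H : Set V | S ⊆ H ∧ Saturated o t H}


/-- `PathFrom o t v w p`: `p` is a directed path from `v` to `w` (the empty path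
counts as the trivial path from `v` to `v`). -/
def PathFrom (o t : E → V) (v w : V) (p : List E) : Prop :=
  IsPath o t p ∧
    ((p = [] ∧ v = w) ∨ ∃ h : p ≠ [], o (p.head h) = v ∧ t (p.getLast h) = w)

section Aux

variable {o t : E → V}

lemma chain'_of_isPath {p : List E} (h : IsPath o t p) :
    List.Chain' (fun e f => t e = o f) p := h

lemma reach_head_verts : ∀ (p : List E), IsPath o t p → ∀ (h : p ≠ []) (v),
    v ∈ FinPathVerts o t p → Reach o t (o (p.head h)) v
  | [], _, h => absurd rfl h
  | e :: rest, hp, h => by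
    intro v hv
    obtain ⟨f, hf, hor⟩ := hv
    rcases List.mem_cons.mp hf with rfl | hf'
    · rcases hor with rfl | rfl
      · exact Relation.ReflTransGen.refl
      · exact Relation.ReflTransGen.single ⟨f, rfl, rfl⟩
    · have hrne : rest ≠ [] := List.ne_nil_of_mem hf'
      obtain ⟨r0, rs, rfl⟩ := List.exists_cons_of_ne_nil hrne
      have hte : t e = o r0 := (List.isChain_cons_cons.mp hp).1
      have hstep : Reach o t (o e) (o r0) :=
        Relation.ReflTransGen.single ⟨e, rfl, hte⟩
      exact hstep.trans
        (reach_head_verts (r0 :: rs) (List.IsChain.tail hp) hrne v ⟨f, hf', hor⟩)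

lemma reach_last_verts : ∀ (p : List E), IsPath o t p → ∀ (h : p ≠ []) (v),
    v ∈ FinPathVerts o t p → Reach o t v (t (p.getLast h))
  | [], _, h => absurd rfl h
  | e :: rest, hp, h => by
    intro v hv
    obtain ⟨f, hf, hor⟩ := hv
    rcases eq_or_ne rest [] with rfl | hrne
    · simp only [List.mem_singleton] at hf
      subst hf
      rcases hor with rfl | rfl
      · exact Relation.ReflTransGen.single ⟨f, rfl, rfl⟩
      · exact Relation.ReflTransGen.refl
    · obtain ⟨r0, rs, rfl⟩ := List.exists_cons_of_ne_nil hrne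
      have hte : t e = o r0 := (List.isChain_cons_cons.mp hp).1
      have hlast : (e :: r0 :: rs).getLast h = (r0 :: rs).getLast (by simp) :=
        List.getLast_cons (by simp)
      rw [hlast]
      have ih := reach_last_verts (r0 :: rs) (List.IsChain.tail hp) (by simp)
      rcases List.mem_cons.mp hf with rfl | hf'
      · have h1 : Reach o t (o r0) ((r0 :: rs).getLast (by simp) |> t) :=
          ih (o r0) ⟨r0, List.mem_cons_self, Or.inl rfl⟩
        rcases hor with rfl | rfl
        · exact (Relation.ReflTransGen.single ⟨f, rfl, hte⟩).trans h1
        · exact hte ▸ h1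
      · exact ih v ⟨f, hf', hor⟩

lemma pathFrom_reach {v w : V} {p : List E} (h : PathFrom o t v w p) :
    Reach o t v w := by
  obtain ⟨hp, hor⟩ := h
  rcases hor with ⟨rfl, rfl⟩ | ⟨hne, hhead, hlastt⟩
  · exact Relation.ReflTransGen.refl
  · have := reach_head_verts p hp hne (t (p.getLast hne))
      ⟨p.getLast hne, List.getLast_mem hne, Or.inr rfl⟩
    rw [hhead, hlastt] at this
    exact this

lemma pathFrom_single (e : E) : PathFrom o t (o e) (t e) [e] := by
  refine ⟨List.isChain_singleton e, Or.inr ⟨by simp, rfl, rfl⟩⟩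

lemma pathFrom_append {v w z : V} {p q : List E}
    (hp : PathFrom o t v w p) (hq : PathFrom o t w z q) :
    PathFrom o t v z (p ++ q) := by
  obtain ⟨hp1, hp2⟩ := hp
  obtain ⟨hq1, hq2⟩ := hq
  rcases hp2 with ⟨rfl, rfl⟩ | ⟨hpne, hph, hpl⟩
  · simpa using ⟨hq1, hq2⟩
  · rcases hq2 with ⟨rfl, rfl⟩ | ⟨hqne, hqh, hql⟩
    · simpa using ⟨hp1, Or.inr ⟨hpne, hph, hpl⟩⟩
    · have hchain : IsPath o t (p ++ q) := by
        refine List.isChain_append.mpr ⟨hp1, hq1, ?_⟩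
        intro a ha b hb
        rw [List.getLast?_eq_getLast hpne] at ha
        rw [List.head?_eq_head hqne] at hb
        obtain rfl : a = p.getLast hpne := (Option.mem_some_iff.mp ha).symm
        obtain rfl : b = q.head hqne := (Option.mem_some_iff.mp hb).symm
        rw [hpl, hqh]
      refine ⟨hchain, Or.inr ⟨by simp [hpne], ?_, ?_⟩⟩
      · rw [List.head_append_of_ne_nil hpne]
        exact hph
      · rw [List.getLast_append_of_ne_nil _ hqne]
        exact hql

lemma reach_pathFrom {v w : V} (h : Reach o t v w) :
    ∃ p, PathFrom o t v w p := by
  induction h with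
  | refl => exact ⟨[], ⟨List.isChain_nil, Or.inl ⟨rfl, rfl⟩⟩⟩
  | tail hr hs ih =>
    obtain ⟨p, hp⟩ := ih
    obtain ⟨e, he1, he2⟩ := hs
    exact ⟨p ++ [e], pathFrom_append hp (he1 ▸ he2 ▸ pathFrom_single e)⟩

lemma circuit_reach {c : List E} (hc : IsCircuit o t c) {a b : V}
    (ha : a ∈ FinPathVerts o t c) (hb : b ∈ FinPathVerts o t c) :
    Reach o t a b := by
  obtain ⟨hp, hne, hcyc⟩ := hc
  have h1 : Reach o t a (t (c.getLast hne)) := reach_last_verts c hp hne a ha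
  have h2 : Reach o t (o (c.head hne)) b := reach_head_verts c hp hne b hb
  rw [hcyc] at h2
  exact h1.trans h2

lemma circuit_vert_origin {c : List E} (hc : IsCircuit o t c) {u : V}
    (hu : u ∈ FinPathVerts o t c) : ∃ g ∈ c, o g = u := by
  obtain ⟨f, hf, hor⟩ := hu
  rcases hor with rfl | rfl
  · exact ⟨f, hf, rfl⟩
  · obtain ⟨hp, hne, hcyc⟩ := hc
    -- either f is the last edge, or it has a successor
    have key : ∀ (p : List E), IsPath o t p → ∀ h : p ≠ [], f ∈ p →
        f = p.getLast h ∨ ∃ g ∈ p, o g = t f := by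
      intro p
      induction p with
      | nil => intro _ h; exact absurd rfl h
      | cons x rest ih =>
        intro hp h hf
        rcases List.mem_cons.mp hf with rfl | hf'
        · rcases eq_or_ne rest [] with rfl | hrne
          · left; simp [List.getLast]
          · obtain ⟨r0, rs, rfl⟩ := List.exists_cons_of_ne_nil hrne
            right
            exact ⟨r0, by simp, ((List.isChain_cons_cons.mp hp).1).symm⟩
        · have hrne : rest ≠ [] := List.ne_nil_of_mem hf'
          rcases ih (List.IsChain.tail hp) hrne hf' with h1 | ⟨g, hg, hog⟩
          · left; rw [h1]; exact (List.getLast_cons hrne).symm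
          · right; exact ⟨g, List.mem_cons_of_mem _ hg, hog⟩
    rcases key c hp hne hf with h1 | ⟨g, hg, hog⟩
    · exact ⟨c.head hne, List.head_mem hne, by rw [hcyc, h1]⟩
    · exact ⟨g, hg, hog⟩

lemma o_mem_verts {p : List E} {e : E} (he : e ∈ p) :
    o e ∈ FinPathVerts o t p := ⟨e, he, Or.inl rfl⟩

lemma t_mem_verts {p : List E} {e : E} (he : e ∈ p) :
    t e ∈ FinPathVerts o t p := ⟨e, he, Or.inr rfl⟩

/-- Longest common prefix splitting of two distinct lists. -/
lemma list_split {α : Type*} : ∀ (p q : List α), p ≠ q →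
    ∃ r p' q', p = r ++ p' ∧ q = r ++ q' ∧
      ((∃ e f p'' q'', p' = e :: p'' ∧ q' = f :: q'' ∧ e ≠ f) ∨
       (p' = [] ∧ q' ≠ []) ∨ (q' = [] ∧ p' ≠ []))
  | [], q, h => ⟨[], [], q, rfl, rfl, Or.inr (Or.inl ⟨rfl, Ne.symm h⟩)⟩
  | p, [], h => ⟨[], p, [], rfl, rfl, Or.inr (Or.inr ⟨rfl, h⟩)⟩
  | a :: p, b :: q, h => by
    rcases eq_or_ne a b with rfl | hab
    · have hpq : p ≠ q := fun hh => h (hh ▸ rfl)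
      obtain ⟨r, p', q', h1, h2, h3⟩ := list_split p q hpq
      exact ⟨a :: r, p', q', by simp [h1], by simp [h2], h3⟩
    · exact ⟨[], a :: p, b :: q, rfl, rfl, Or.inl ⟨a, b, p, q, rfl, rfl, hab⟩⟩

/-- The flattening of a sequence of nonempty segments into one infinite sequence. -/
def flat (segs : ℕ → List E) (h1 : ∀ n, 0 < (segs n).length) : ℕ → ℕ → E
  | n, k =>
    if h : k < (segs n).length then (segs n).get ⟨k, h⟩
    else
      have hk : 0 < k := lt_of_lt_of_le (h1 n) (not_lt.mp h)
      flat segs h1 (n + 1) (k - (segs n).length)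
  termination_by n k => k
  decreasing_by exact Nat.sub_lt hk (h1 n)

lemma flat_eq (segs : ℕ → List E) (h1 : ∀ n, 0 < (segs n).length) (n k : ℕ) :
    flat segs h1 n k =
      if h : k < (segs n).length then (segs n).get ⟨k, h⟩
      else flat segs h1 (n + 1) (k - (segs n).length) := by
  rw [flat]

lemma flat_get (segs : ℕ → List E) (h1 : ∀ n, 0 < (segs n).length) (n d : ℕ)
    (hd : d < (segs n).length) : flat segs h1 n d = (segs n).get ⟨d, hd⟩ := by
  rw [flat_eq, dif_pos hd]

lemma flat_add (segs : ℕ → List E) (h1 : ∀ n, 0 < (segs n).length) (m j : ℕ) :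
    flat segs h1 m ((segs m).length + j) = flat segs h1 (m + 1) j := by
  rw [flat_eq, dif_neg (by omega)]
  congr 1
  omega

lemma flat_lift (segs : ℕ → List E) (h1 : ∀ n, 0 < (segs n).length) :
    ∀ (n j : ℕ), ∃ k, flat segs h1 0 k = flat segs h1 n j := by
  intro n
  induction n with
  | zero => exact fun j => ⟨j, rfl⟩
  | succ n ih =>
    intro j
    obtain ⟨k, hk⟩ := ih ((segs n).length + j)
    exact ⟨k, by rw [hk, flat_add]⟩

lemma flat_mem (segs : ℕ → List E) (h1 : ∀ n, 0 < (segs n).length) {n : ℕ} {e : E}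
    (he : e ∈ segs n) : ∃ k, flat segs h1 0 k = e := by
  obtain ⟨⟨d, hd⟩, rfl⟩ := List.mem_iff_get.mp he
  obtain ⟨k, hk⟩ := flat_lift segs h1 n d
  exact ⟨k, by rw [hk, flat_get]⟩

lemma flat_infPath (segs : ℕ → List E) (h1 : ∀ n, 0 < (segs n).length)
    (hp : ∀ n, IsPath o t (segs n))
    (hl : ∀ n, t ((segs n).getLast (List.length_pos_iff.mp (h1 n))) =
      o ((segs (n + 1)).head (List.length_pos_iff.mp (h1 (n + 1))))) :
    IsInfPath o t (flat segs h1 0) := by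
  have main : ∀ k n, t (flat segs h1 n k) = o (flat segs h1 n (k + 1)) := by
    intro k
    induction k using Nat.strong_induction_on with
    | _ k ih =>
      intro n
      by_cases hk : k < (segs n).length
      · by_cases hk1 : k + 1 < (segs n).length
        · rw [flat_get segs h1 n k hk, flat_get segs h1 n (k + 1) hk1]
          exact List.isChain_iff_getElem.mp (hp n) k (by omega)
        · have hlen : k + 1 = (segs n).length := by omega
          rw [flat_get segs h1 n k hk]
          have h0 : flat segs h1 n (k + 1) = flat segs h1 (n + 1) 0 := by
            rw [flat_eq, dif_neg (by omega)]
            congr 1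
            omega
          rw [h0, flat_get segs h1 (n + 1) 0 (h1 (n + 1))]
          have hk' : k = (segs n).length - 1 := by omega
          subst hk'
          have e1 : (segs n).get ⟨(segs n).length - 1, hk⟩ =
              (segs n).getLast (List.length_pos_iff.mp (h1 n)) := by
            rw [List.getLast_eq_getElem]
            simp [List.get_eq_getElem]
          have e2 : (segs (n + 1)).get ⟨0, h1 (n + 1)⟩ =
              (segs (n + 1)).head (List.length_pos_iff.mp (h1 (n + 1))) := by
            simp [List.get_eq_getElem, List.head_eq_getElem_zero]
          rw [e1, e2]
          exact hl n
      · rw [flat_eq segs h1 n k, dif_neg hk, flat_eq segs h1 n (k + 1),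
          dif_neg (by omega)]
        have h3 : k + 1 - (segs n).length = (k - (segs n).length) + 1 := by
          have := h1 n; omega
        rw [h3]
        exact ih (k - (segs n).length) (by have := h1 n; omega) (n + 1)
  exact fun n => main n 0

/-- The core construction: from step data produce an infinite path with
infinitely many return vertices. -/
lemma core (o t : E → V) (X : ℕ → V) (seg : ℕ → List E) (u : ℕ → V) (a b : ℕ → E)
    (hne : ∀ n, seg n ≠ [])
    (hpf : ∀ n, PathFrom o t (X n) (X (n + 1)) (seg n))
    (ha : ∀ n, a n ∈ seg n)
    (hoa : ∀ n, o (a n) = u n) (hob : ∀ n, o (b n) = u n)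
    (hab : ∀ n, a n ≠ b n)
    (hra : ∀ n, Reach o t (t (a n)) (X (n + 1)))
    (hrb : ∀ n, Reach o t (t (b n)) (X (n + 1)))
    (hnr : ∀ n, ¬ Reach o t (t (a n)) (u n)) :
    ∃ l : ℕ → E, IsInfPath o t l ∧ (ReturnVerts o t l).Infinite := by
  have h1 : ∀ n, 0 < (seg n).length := fun n => List.length_pos_iff.mpr (hne n)
  have hep : ∀ n, ∃ hn : seg n ≠ [],
      o ((seg n).head hn) = X n ∧ t ((seg n).getLast hn) = X (n + 1) := by
    intro n
    rcases (hpf n).2 with ⟨hnil, _⟩ | ⟨hn, h2, h3⟩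
    · exact absurd hnil (hne n)
    · exact ⟨hn, h2, h3⟩
  have hpath : ∀ n, IsPath o t (seg n) := fun n => (hpf n).1
  have hlink : ∀ n, t ((seg n).getLast (List.length_pos_iff.mp (h1 n))) =
      o ((seg (n + 1)).head (List.length_pos_iff.mp (h1 (n + 1)))) := by
    intro n
    obtain ⟨hn, _, h3⟩ := hep n
    obtain ⟨hn', h2', _⟩ := hep (n + 1)
    rw [h3, h2']
  set l := flat seg h1 0 with hl
  have hinf : IsInfPath o t l := flat_infPath seg h1 hpath hlink
  refine ⟨l, hinf, ?_⟩
  -- vertices in segments are on l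
  have hvert : ∀ n (e : E), e ∈ seg n → o e ∈ InfPathVerts o t l := by
    intro n e he
    obtain ⟨k, hk⟩ := flat_mem seg h1 he
    exact ⟨k, by rw [← hl] at hk; rw [hk]⟩
  have hXmem : ∀ n, X n ∈ InfPathVerts o t l := by
    intro n
    obtain ⟨hn, h2, _⟩ := hep n
    have := hvert n ((seg n).head hn) (List.head_mem hn)
    rwa [h2] at this
  have hu_mem : ∀ n, u n ∈ ReturnVerts o t l := by
    intro n
    refine ⟨(hoa n) ▸ hvert n (a n) (ha n), a n, b n, hab n, hoa n, hob n,
      ⟨X (n + 1), hXmem (n + 1), hra n⟩, ⟨X (n + 1), hXmem (n + 1), hrb n⟩⟩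
  -- injectivity of u
  have hXreach : ∀ m n, m ≤ n → Reach o t (X m) (X n) := by
    intro m n hmn
    induction n, hmn using Nat.le_induction with
    | base => exact Relation.ReflTransGen.refl
    | succ n hmn ih => exact ih.trans (pathFrom_reach (hpf n))
  have hXu : ∀ n, Reach o t (X n) (u n) := by
    intro n
    obtain ⟨hn, h2, _⟩ := hep n
    have := reach_head_verts (seg n) (hpath n) hn (u n)
      ⟨a n, ha n, Or.inl (hoa n)⟩
    rwa [h2] at this
  have hdist : ∀ i j, i < j → u i ≠ u j := by
    intro i j hij heq
    apply hnr i
    rw [heq]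
    exact (hra i).trans ((hXreach (i + 1) j hij).trans (hXu j))
  have hinj : Function.Injective u := by
    intro i j hij
    rcases Nat.lt_trichotomy i j with h | h | h
    · exact absurd hij (hdist i j h)
    · exact h
    · exact absurd hij.symm (hdist j i h)
  exact Set.infinite_of_injective_forall_mem hinj hu_mem

/-- Application 1: if there are no terminal circuits and every vertex reaches a
circuit, we get an infinite path with infinitely many return vertices. -/
lemma app1 [Nonempty V] (o t : E → V)
    (h1 : ∀ p : List E, IsCircuit o t p →
      TerminalCircuit o t p ∨ TransitoryCircuit o t p)
    (hnoterm : ∀ c : List E, ¬ TerminalCircuit o t c)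
    (hall : ∀ x : V, ∃ (c : List E) (z : V),
      IsCircuit o t c ∧ z ∈ FinPathVerts o t c ∧ Reach o t x z) :
    ∃ l : ℕ → E, IsInfPath o t l ∧ (ReturnVerts o t l).Infinite := by
  have step : ∀ x : V, ∃ (s : List E) (y uu : V) (av bv : E),
      s ≠ [] ∧ PathFrom o t x y s ∧ av ∈ s ∧ o av = uu ∧ o bv = uu ∧ av ≠ bv ∧
      Reach o t (t av) y ∧ Reach o t (t bv) y ∧ ¬ Reach o t (t av) uu := by
    intro x
    obtain ⟨c, z, hc, hz, hxz⟩ := hall x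
    rcases h1 c hc with hterm | htrans
    · exact absurd hterm (hnoterm c)
    obtain ⟨_, ⟨e, hexit⟩, hnoret⟩ := htrans
    obtain ⟨henm, hoe⟩ := hexit
    obtain ⟨g, hg, hog⟩ := circuit_vert_origin hc hoe
    have hxu : Reach o t x (o e) := hxz.trans (circuit_reach hc hz hoe)
    obtain ⟨p1, hp1⟩ := reach_pathFrom hxu
    refine ⟨p1 ++ [e], t e, o e, e, g, by simp, pathFrom_append hp1 (pathFrom_single e),
      by simp, rfl, hog, ?_, Relation.ReflTransGen.refl, ?_, ?_⟩
    · intro hh; exact henm (hh ▸ hg)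
    · have h0 : Reach o t (t g) (o e) := circuit_reach hc (t_mem_verts hg) hoe
      exact h0.tail ⟨e, rfl, rfl⟩
    · exact hnoret e ⟨henm, hoe⟩ (o e) hoe
  choose s y uu av bv hsne hpf hmem hoa hob hab hra hrb hnr using step
  set X : ℕ → V := fun n => y^[n] (Classical.arbitrary V) with hX
  have hXs : ∀ n, X (n + 1) = y (X n) := fun n => Function.iterate_succ_apply' y n _
  refine core o t X (fun n => s (X n)) (fun n => uu (X n)) (fun n => av (X n))
    (fun n => bv (X n)) (fun n => hsne (X n)) (fun n => (hXs n) ▸ hpf (X n))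
    (fun n => hmem (X n)) (fun n => hoa (X n)) (fun n => hob (X n))
    (fun n => hab (X n)) (fun n => (hXs n) ▸ hra (X n))
    (fun n => (hXs n) ▸ hrb (X n)) (fun n => hnr (X n))

/-- Application 2: if no circuit is reachable from `v₀` but every vertex
downstream of `v₀` admits two distinct paths to a common vertex, we get an
infinite path with infinitely many return vertices. -/
lemma app2 (o t : E → V) (v₀ : V)
    (hnoc : ∀ (c : List E) (z : V), IsCircuit o t c → z ∈ FinPathVerts o t c →
      ¬ Reach o t v₀ z)
    (hdiam : ∀ x : V, Reach o t v₀ x → ∃ w, Reach o t x w ∧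
      ∃ p q, PathFrom o t x w p ∧ PathFrom o t x w q ∧ p ≠ q) :
    ∃ l : ℕ → E, IsInfPath o t l ∧ (ReturnVerts o t l).Infinite := by
  -- a prefix situation yields a circuit downstream, contradiction
  have prefix_case : ∀ (x w : V) (r q' : List E), Reach o t v₀ x →
      PathFrom o t x w r → PathFrom o t x w (r ++ q') → q' ≠ [] → False := by
    intro x w r q' hvx hp hq hq'
    rcases hp.2 with ⟨rfl, rfl⟩ | ⟨hrne, hrh, hrl⟩
    · -- r = [], x = w, q' is a circuit at x
      simp only [List.nil_append] at hq
      obtain ⟨hq1, hq2⟩ := hq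
      rcases hq2 with ⟨h, _⟩ | ⟨hne, hh, hl⟩
      · exact hq' h
      · exact hnoc q' x ⟨hq1, hne, by rw [hh, hl]⟩ ⟨q'.head hne, List.head_mem hne,
          Or.inl hh⟩ hvx
    · -- r ≠ [], q' is a circuit at w
      obtain ⟨hq1, hq2⟩ := hq
      rcases hq2 with ⟨h, _⟩ | ⟨hne, hh, hl⟩
      · exact hq' (by simpa using (List.append_eq_nil_iff.mp h).2)
      · have hq'path : IsPath o t q' := (List.isChain_append.mp hq1).2.1
        have hlink : t (r.getLast hrne) = o (q'.head hq') := by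
          have := (List.isChain_append.mp hq1).2.2
          exact this _ (by rw [List.getLast?_eq_getLast hrne]; exact rfl) _
            (by rw [List.head?_eq_head hq']; exact rfl)
        have hlast : (r ++ q').getLast hne = q'.getLast hq' :=
          List.getLast_append_of_ne_nil _ hq'
        have hcirc : IsCircuit o t q' := by
          refine ⟨hq'path, hq', ?_⟩
          rw [← hlink, hrl, ← hlast, hl]
        exact hnoc q' w hcirc ⟨q'.head hq', List.head_mem hq',
          Or.inl (by rw [← hlink, hrl])⟩ (hvx.trans (pathFrom_reach hp))
  have step : ∀ x : V, Reach o t v₀ x → ∃ (s : List E) (yy uu : V) (av bv : E),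
      Reach o t v₀ yy ∧
      s ≠ [] ∧ PathFrom o t x yy s ∧ av ∈ s ∧ o av = uu ∧ o bv = uu ∧ av ≠ bv ∧
      Reach o t (t av) yy ∧ Reach o t (t bv) yy ∧ ¬ Reach o t (t av) uu := by
    intro x hvx
    obtain ⟨w, hxw, p, q, hp, hq, hpq⟩ := hdiam x hvx
    obtain ⟨r, p', q', hpe, hqe, hcase⟩ := list_split p q hpq
    rcases hcase with ⟨e, f, p'', q'', rfl, rfl, hef⟩ | ⟨hp', hq'⟩ | ⟨hq', hp'⟩
    · -- main diamond case
      have hpne : p ≠ [] := by rw [hpe]; simp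
      have hqne : q ≠ [] := by rw [hqe]; simp
      obtain ⟨hpne', hph, hpl⟩ : ∃ h : p ≠ [], o (p.head h) = x ∧ t (p.getLast h) = w := by
        rcases hp.2 with ⟨h, _⟩ | hh
        · exact absurd h hpne
        · exact hh
      obtain ⟨hqne', hqh, hql⟩ : ∃ h : q ≠ [], o (q.head h) = x ∧ t (q.getLast h) = w := by
        rcases hq.2 with ⟨h, _⟩ | hh
        · exact absurd h hqne
        · exact hh
      have hoef : o e = o f := by
        rcases eq_or_ne r [] with rfl | hrne
        · -- heads are e and f, both with origin x
          have h1 : p.head hpne' = e := by subst hpe; simp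
          have h2 : q.head hqne' = f := by subst hqe; simp
          rw [h1] at hph; rw [h2] at hqh
          rw [hph, hqh]
        · have hpc := (List.isChain_append.mp (hpe ▸ hp.1)).2.2
          have hqc := (List.isChain_append.mp (hqe ▸ hq.1)).2.2
          have h1 : t (r.getLast hrne) = o e :=
            hpc _ (by rw [List.getLast?_eq_getLast hrne]; exact rfl) _ (by simp)
          have h2 : t (r.getLast hrne) = o f :=
            hqc _ (by rw [List.getLast?_eq_getLast hrne]; exact rfl) _ (by simp)
          rw [← h1, ← h2]
      have hep : e ∈ p := by rw [hpe]; simp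
      have hfq : f ∈ q := by rw [hqe]; simp
      have hreach_te_w : Reach o t (t e) w := by
        have := reach_last_verts p hp.1 hpne' (t e) (t_mem_verts hep)
        rwa [hpl] at this
      have hreach_tf_w : Reach o t (t f) w := by
        have := reach_last_verts q hq.1 hqne' (t f) (t_mem_verts hfq)
        rwa [hql] at this
      have hxoe : Reach o t x (o e) := by
        have := reach_head_verts p hp.1 hpne' (o e) (o_mem_verts hep)
        rwa [hph] at this
      refine ⟨p, w, o e, e, f, hvx.trans hxw, hpne', hp, hep, rfl, hoef.symm, hef,
        hreach_te_w, hreach_tf_w, ?_⟩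
      -- no return to o e : would give a circuit downstream of v₀
      intro hret
      obtain ⟨pl, hpl2⟩ := reach_pathFrom hret
      rcases hpl2.2 with ⟨rfl, hte⟩ | ⟨hplne, hplh, hpll⟩
      · -- t e = o e : circuit [e]
        exact hnoc [e] (o e) ⟨List.isChain_singleton e, by simp, by simp [← hte]⟩
          ⟨e, by simp⟩ (hvx.trans hxoe)
      · -- circuit e :: pl
        have hcirc : IsCircuit o t (e :: pl) := by
          refine ⟨?_, by simp, ?_⟩
          · refine List.isChain_cons.mpr ⟨?_, hpl2.1⟩
            intro y hy
            rw [List.head?_eq_head hplne] at hy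
            obtain rfl : y = pl.head hplne := (Option.mem_some_iff.mp hy).symm
            rw [hplh]
          · have : (e :: pl).getLast (by simp) = pl.getLast hplne :=
              List.getLast_cons hplne
            simp only [List.head_cons, this, hpll]
        exact hnoc (e :: pl) (o e) hcirc ⟨e, by simp⟩ (hvx.trans hxoe)
    · exact (prefix_case x w r q' hvx
        (by rw [hpe, hp'] at hp; simpa using hp) (hqe ▸ hq) hq').elim
    · exact (prefix_case x w r p' hvx
        (by rw [hqe, hq'] at hq; simpa using hq) (hpe ▸ hp) hp').elim
  choose s yy uu av bv hvy hsne hpf hmem hoa hob hab hra hrb hnr using step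
  let g : {x : V // Reach o t v₀ x} → {x : V // Reach o t v₀ x} :=
    fun z => ⟨yy z.1 z.2, hvy z.1 z.2⟩
  set X' : ℕ → {x : V // Reach o t v₀ x} :=
    fun n => g^[n] ⟨v₀, Relation.ReflTransGen.refl⟩ with hX'
  have hXs : ∀ n, X' (n + 1) = g (X' n) := fun n => Function.iterate_succ_apply' g n _
  have hXval : ∀ n, (X' (n + 1)).1 = yy (X' n).1 (X' n).2 := by
    intro n; rw [hXs]
  have hpf' : ∀ n, PathFrom o t (X' n).1 (X' (n + 1)).1 (s (X' n).1 (X' n).2) := by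
    intro n
    rw [hXval n]
    exact hpf _ _
  have hra' : ∀ n, Reach o t (t (av (X' n).1 (X' n).2)) (X' (n + 1)).1 := by
    intro n
    rw [hXval n]
    exact hra _ _
  have hrb' : ∀ n, Reach o t (t (bv (X' n).1 (X' n).2)) (X' (n + 1)).1 := by
    intro n
    rw [hXval n]
    exact hrb _ _
  exact core o t (fun n => (X' n).1) (fun n => s (X' n).1 (X' n).2)
    (fun n => uu (X' n).1 (X' n).2) (fun n => av (X' n).1 (X' n).2)
    (fun n => bv (X' n).1 (X' n).2)
    (fun n => hsne _ _) hpf'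
    (fun n => hmem _ _) (fun n => hoa _ _) (fun n => hob _ _)
    (fun n => hab _ _) hra' hrb' (fun n => hnr _ _)

/-- Reachability from a vertex on a terminal circuit stays on the circuit. -/
lemma terminal_reach_subset {c : List E} (hc : TerminalCircuit o t c) {v w : V}
    (hv : v ∈ FinPathVerts o t c) (hr : Reach o t v w) :
    w ∈ FinPathVerts o t c := by
  induction hr with
  | refl => exact hv
  | tail hr hs ih =>
    obtain ⟨e, he1, he2⟩ := hs
    by_cases hec : e ∈ c
    · exact he2 ▸ t_mem_verts hec
    · exact absurd ⟨hec, he1 ▸ ih⟩ (hc.2 e)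

end Aux

/-- If every circuit of `E` is terminal or transitory and every
infinite path `l` has `N_l` finite, then some vertex `v` has `E(v)` equal to a
terminal circuit or a tree. -/
theorem stmt7 [Countable V] [Countable E] [Nonempty V] (o t : E → V)
    (h1 : ∀ p : List E, IsCircuit o t p →
      TerminalCircuit o t p ∨ TransitoryCircuit o t p)
    (h2 : ∀ l : ℕ → E, IsInfPath o t l → (ReturnVerts o t l).Finite) :
    ∃ v : V,
      (∃ α : List E, TerminalCircuit o t α ∧ v ∈ FinPathVerts o t α ∧
        {w : V | Reach o t v w} = FinPathVerts o t α) ∨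
      (∀ w : V, Reach o t v w →
        ∀ p q : List E, PathFrom o t v w p → PathFrom o t v w q → p = q) := by
  by_contra hcon
  have hcon' : ∀ v : V,
      ¬ ((∃ α : List E, TerminalCircuit o t α ∧ v ∈ FinPathVerts o t α ∧
        {w : V | Reach o t v w} = FinPathVerts o t α) ∨
      (∀ w : V, Reach o t v w →
        ∀ p q : List E, PathFrom o t v w p → PathFrom o t v w q → p = q)) :=
    fun v hv => hcon ⟨v, hv⟩
  by_cases hterm : ∃ c : List E, TerminalCircuit o t c
  · -- a terminal circuit exists: its vertices give case 1
    obtain ⟨c, hc⟩ := hterm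
    obtain ⟨⟨hcp, hcne, hcyc⟩, hnoexit⟩ := hc
    set v := o (c.head hcne) with hv
    have hvmem : v ∈ FinPathVerts o t c := ⟨c.head hcne, List.head_mem hcne, Or.inl rfl⟩
    have hset : {w : V | Reach o t v w} = FinPathVerts o t c := by
      ext w
      constructor
      · exact fun hw => terminal_reach_subset ⟨⟨hcp, hcne, hcyc⟩, hnoexit⟩ hvmem hw
      · exact fun hw => circuit_reach ⟨hcp, hcne, hcyc⟩ hvmem hw
    exact hcon' v (Or.inl ⟨c, ⟨⟨hcp, hcne, hcyc⟩, hnoexit⟩, hvmem, hset⟩)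
  · push_neg at hterm
    -- no terminal circuit
    by_cases hall : ∀ x : V, ∃ (c : List E) (z : V),
        IsCircuit o t c ∧ z ∈ FinPathVerts o t c ∧ Reach o t x z
    · obtain ⟨l, hl, hlinf⟩ := app1 o t h1 hterm hall
      exact hlinf (h2 l hl)
    · push_neg at hall
      obtain ⟨v₀, hv₀⟩ := hall
      have hnoc : ∀ (c : List E) (z : V), IsCircuit o t c → z ∈ FinPathVerts o t c →
          ¬ Reach o t v₀ z := fun c z hc hz hr => hv₀ c z hc hz hr
      have hdiam : ∀ x : V, Reach o t v₀ x → ∃ w, Reach o t x w ∧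
          ∃ p q, PathFrom o t x w p ∧ PathFrom o t x w q ∧ p ≠ q := by
        intro x _
        have hB : ¬ (∀ w : V, Reach o t x w →
            ∀ p q : List E, PathFrom o t x w p → PathFrom o t x w q → p = q) :=
          fun hb => hcon' x (Or.inr hb)
        push_neg at hB
        obtain ⟨w, hw, p, q, hp, hq, hpq⟩ := hB
        exact ⟨w, hw, p, q, hp, hq, hpq⟩
      obtain ⟨l, hl, hlinf⟩ := app2 o t v₀ hnoc hdiam
      exact hlinf (h2 l hl)

end CKGraph
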